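/- In the composite setting with t ≤ 1/μ, the exact prox-linear iterates x_{k+1} = S_t(x_k) satisfy min_{j=0,…,N−1} ‖G_t(x_j)‖² ≤ 2t⁻¹(F(x_0) − F*)/N, where F* = lim F(x_N). -/

import Mathlib

open Set Finset

private lemma taylor_half_bound {E F : Type*} [NormedAddCommGroup E] [NormedSpace ℝ E]
    [NormedAddCommGroup F] [NormedSpace ℝ F]
    (c : E → F) (β : ℝ) (hc : ContDiff ℝ 1 c)
    (hcβ : ∀ x y, ‖fderiv ℝ c x - fderiv ℝ c y‖ ≤ β * ‖x - y‖) (x y : E) :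
    ‖c y - c x - fderiv ℝ c x (y - x)‖ ≤ β / 2 * ‖y - x‖ ^ 2 := by
  set Δ := y - x with hΔ
  set A := fderiv ℝ c x with hA
  have hdiff : Differentiable ℝ c := hc.differentiable one_ne_zero
  set f : ℝ → F := fun s => c (x + s • Δ) - c x - s • (A Δ) with hf
  have hline : ∀ s : ℝ, HasDerivAt (fun s : ℝ => x + s • Δ) Δ s := by
    intro s
    simpa using ((hasDerivAt_id s).smul_const Δ).const_add x
  have hf' : ∀ s : ℝ, HasDerivAt f ((fderiv ℝ c (x + s • Δ)) Δ - A Δ) s := by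
    intro s
    have h1 : HasDerivAt (fun s : ℝ => c (x + s • Δ)) ((fderiv ℝ c (x + s • Δ)) Δ) s :=
      (hdiff (x + s • Δ)).hasFDerivAt.comp_hasDerivAt s (hline s)
    have h2 : HasDerivAt (fun s : ℝ => s • (A Δ)) (A Δ) s := by
      simpa using (hasDerivAt_id s).smul_const (A Δ)
    exact (h1.sub_const (c x)).sub h2
  set B : ℝ → ℝ := fun s => β * ‖Δ‖ ^ 2 * s ^ 2 / 2 with hB
  have hB' : ∀ s : ℝ, HasDerivAt B (β * ‖Δ‖ ^ 2 * s) s := by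
    intro s
    have h := ((hasDerivAt_pow 2 s).const_mul (β * ‖Δ‖ ^ 2)).div_const 2
    have e : β * ‖Δ‖ ^ 2 * ((2:ℕ) * s ^ (2 - 1)) / 2 = β * ‖Δ‖ ^ 2 * s := by
      push_cast; ring
    rw [e] at h
    exact h
  have bound : ∀ s ∈ Ico (0:ℝ) 1, ‖(fderiv ℝ c (x + s • Δ)) Δ - A Δ‖ ≤ β * ‖Δ‖ ^ 2 * s := by
    intro s hs
    have h1 : ‖(fderiv ℝ c (x + s • Δ)) Δ - A Δ‖ ≤ ‖fderiv ℝ c (x + s • Δ) - A‖ * ‖Δ‖ := by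
      simpa using (fderiv ℝ c (x + s • Δ) - A).le_opNorm Δ
    have h2 : ‖fderiv ℝ c (x + s • Δ) - A‖ ≤ β * (s * ‖Δ‖) := by
      have := hcβ (x + s • Δ) x
      simpa [norm_smul, abs_of_nonneg hs.1] using this
    calc ‖(fderiv ℝ c (x + s • Δ)) Δ - A Δ‖ ≤ ‖fderiv ℝ c (x + s • Δ) - A‖ * ‖Δ‖ := h1
      _ ≤ β * (s * ‖Δ‖) * ‖Δ‖ := by
          apply mul_le_mul_of_nonneg_right h2 (norm_nonneg _)
      _ = β * ‖Δ‖ ^ 2 * s := by ring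
  have key := image_norm_le_of_norm_deriv_right_le_deriv_boundary
    (f := f) (f' := fun s => (fderiv ℝ c (x + s • Δ)) Δ - A Δ) (a := 0) (b := 1)
    (fun s _ => (hf' s).continuousAt.continuousWithinAt)
    (fun s _ => (hf' s).hasDerivWithinAt)
    (B := B) (B' := fun s => β * ‖Δ‖ ^ 2 * s)
    (by simp [hf, hB]) (fun s => hB' s) bound
  have h1 := key (right_mem_Icc.2 zero_le_one)
  have : f 1 = c y - c x - A Δ := by simp [hf, hΔ]
  rw [this] at h1
  calc ‖c y - c x - A Δ‖ ≤ B 1 := h1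
    _ = β / 2 * ‖y - x‖ ^ 2 := by simp [hB, hΔ]; ring

/-- Efficiency of the exact prox-linear method: with `t ≤ 1/μ` (`μ = Lβ`), the iterates
`x_{k+1} = S_t(x_k)` satisfy `min_{j<N} ‖G_t(x_j)‖² ≤ 2 t⁻¹ (F(x_0) - F*) / N` where
`F* = lim_N F(x_N)` and `G_t(x_j) = t⁻¹ (x_j - x_{j+1})`. -/
theorem prox_linear_efficiency {d m : ℕ}
    (g : EuclideanSpace ℝ (Fin d) → ℝ)
    (h : EuclideanSpace ℝ (Fin m) → ℝ)
    (c : EuclideanSpace ℝ (Fin d) → EuclideanSpace ℝ (Fin m))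
    (L β t : ℝ) (hL : 0 ≤ L) (hβ : 0 ≤ β) (ht : 0 < t) (htμ : t ≤ (L * β)⁻¹)
    (hg : ConvexOn ℝ Set.univ g) (hgc : LowerSemicontinuous g)
    (hh : ConvexOn ℝ Set.univ h)
    (hhL : ∀ u v, |h u - h v| ≤ L * ‖u - v‖)
    (hc : ContDiff ℝ 1 c)
    (hcβ : ∀ x y, ‖fderiv ℝ c x - fderiv ℝ c y‖ ≤ β * ‖x - y‖)
    (x : ℕ → EuclideanSpace ℝ (Fin d))
    (hstep : ∀ k z,
      g (x (k + 1)) + h (c (x k) + fderiv ℝ c (x k) (x (k + 1) - x k)) +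
          ‖x (k + 1) - x k‖ ^ 2 / (2 * t) ≤
        g z + h (c (x k) + fderiv ℝ c (x k) (z - x k)) + ‖z - x k‖ ^ 2 / (2 * t))
    (Fstar : ℝ)
    (hlim : Filter.Tendsto (fun N => g (x N) + h (c (x N))) Filter.atTop (nhds Fstar)) :
    ∀ N : ℕ, 0 < N → ∃ j < N,
      ‖t⁻¹ • (x j - x (j + 1))‖ ^ 2 ≤ 2 * t⁻¹ * (g (x 0) + h (c (x 0)) - Fstar) / N := by
  intro N hN
  have ht' : t ≠ 0 := ne_of_gt ht
  set Fv : ℕ → ℝ := fun k => g (x k) + h (c (x k)) with hFv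
  -- `L * β ≤ t⁻¹`
  have hLβ : L * β ≤ t⁻¹ := by
    rcases (mul_nonneg hL hβ).eq_or_lt with h0 | h0
    · rw [← h0]; positivity
    · have := one_div_le_one_div_of_le ht htμ
      rw [one_div, one_div, inv_inv] at this
      exact this
  -- Per-step descent
  have key : ∀ k, Fv (k + 1) + ‖x (k + 1) - x k‖ ^ 2 / (2 * t) ≤ Fv k := by
    intro k
    set S := x (k + 1) with hS
    set xk := x k with hxk
    set A := fderiv ℝ c xk with hA
    set Δ := S - xk with hΔd
    set b := ‖Δ‖ ^ 2 / (2 * t) with hb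
    have hbpos : 0 ≤ b := by positivity
    -- strong convexity gap of the model
    have hlam : ∀ lam : ℝ, 0 < lam → lam ≤ 1 →
        (g S + h (c xk + A Δ)) - (g xk + h (c xk)) ≤ (lam - 2) * b := by
      intro lam hl0 hl1
      set z := (1 - lam) • S + lam • xk with hz
      have hzsub : z - xk = (1 - lam) • Δ := by
        simp only [hz, hΔd]
        module
      have hgz : g z ≤ (1 - lam) * g S + lam * g xk :=
        hg.2 (mem_univ S) (mem_univ xk) (by linarith) hl0.le (by ring)
      have haff : c xk + A (z - xk) = (1 - lam) • (c xk + A Δ) + lam • (c xk) := by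
        rw [hzsub, map_smul]
        module
      have hhz : h (c xk + A (z - xk)) ≤ (1 - lam) * h (c xk + A Δ) + lam * h (c xk) := by
        rw [haff]
        exact hh.2 (mem_univ _) (mem_univ _) (by linarith) hl0.le (by ring)
      have hnz : ‖z - xk‖ ^ 2 / (2 * t) = (1 - lam) ^ 2 * b := by
        rw [hzsub, norm_smul, Real.norm_eq_abs, mul_pow, sq_abs, hb]
        ring
      have hs := hstep k z
      rw [← hS, ← hxk, ← hA, ← hΔd, ← hb, hnz] at hs
      have hcomb : lam * ((g S + h (c xk + A Δ)) - (g xk + h (c xk))) ≤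
          lam * ((lam - 2) * b) := by nlinarith
      exact le_of_mul_le_mul_left hcomb hl0
    have gap : g S + h (c xk + A Δ) + 2 * b ≤ g xk + h (c xk) := by
      rcases hbpos.eq_or_lt with hb0 | hb0
      · have := hlam 1 one_pos le_rfl
        linarith [hb0]
      · by_contra hcon
        push_neg at hcon
        set ε := g S + h (c xk + A Δ) + 2 * b - (g xk + h (c xk)) with hε
        have hεpos : 0 < ε := by simp only [hε]; linarith
        set lam := min 1 (ε / (2 * b)) with hlamdef
        have hl0 : 0 < lam := lt_min one_pos (by positivity)
        have hl1 : lam ≤ 1 := min_le_left _ _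
        have h1 := hlam lam hl0 hl1
        have hlb : lam * b ≤ ε / 2 := by
          calc lam * b ≤ (ε / (2 * b)) * b :=
                mul_le_mul_of_nonneg_right (min_le_right _ _) hbpos
            _ = ε / 2 := by field_simp
        have : (lam - 2) * b = lam * b - 2 * b := by ring
        linarith [h1, hlb]
    -- Taylor bound
    have htay := taylor_half_bound c β hc hcβ xk S
    rw [← hA, ← hΔd] at htay
    have hhdiff : h (c S) - h (c xk + A Δ) ≤ L * ‖c S - c xk - A Δ‖ := by
      have := hhL (c S) (c xk + A Δ)
      have heq : c S - (c xk + A Δ) = c S - c xk - A Δ := by abel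
      calc h (c S) - h (c xk + A Δ) ≤ |h (c S) - h (c xk + A Δ)| := le_abs_self _
        _ ≤ L * ‖c S - (c xk + A Δ)‖ := this
        _ = L * ‖c S - c xk - A Δ‖ := by rw [heq]
    have hLtay : L * ‖c S - c xk - A Δ‖ ≤ b := by
      calc L * ‖c S - c xk - A Δ‖ ≤ L * (β / 2 * ‖Δ‖ ^ 2) :=
            mul_le_mul_of_nonneg_left htay hL
        _ = (L * β) * (‖Δ‖ ^ 2 / 2) := by ring
        _ ≤ t⁻¹ * (‖Δ‖ ^ 2 / 2) :=
            mul_le_mul_of_nonneg_right hLβ (by positivity)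
        _ = b := by rw [hb]; ring
    -- combine
    show g S + h (c S) + ‖Δ‖ ^ 2 / (2 * t) ≤ g xk + h (c xk)
    rw [← hb]
    linarith [hhdiff, hLtay, gap]
  -- monotonicity and limit bound
  have hterm : ∀ k, 0 ≤ ‖x (k + 1) - x k‖ ^ 2 / (2 * t) := fun k => by positivity
  have hmono : Antitone Fv :=
    antitone_nat_of_succ_le fun n =>
      le_trans (le_add_of_nonneg_right (hterm n)) (key n)
  have hFstar : ∀ n, Fstar ≤ Fv n := fun n =>
    le_of_tendsto hlim (Filter.eventually_atTop.2 ⟨n, fun m hm => hmono hm⟩)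
  -- telescoping sum
  have hsum : ∀ n : ℕ, (∑ j ∈ Finset.range n, ‖x (j + 1) - x j‖ ^ 2 / (2 * t)) ≤
      Fv 0 - Fv n := by
    intro n
    induction n with
    | zero => simp
    | succ n ih =>
      rw [Finset.sum_range_succ]
      linarith [key n, ih]
  -- choose minimizing index
  obtain ⟨j, hj, hmin⟩ := Finset.exists_min_image (Finset.range N)
    (fun j => ‖x (j + 1) - x j‖ ^ 2) (Finset.nonempty_range_iff.2 hN.ne')
  refine ⟨j, Finset.mem_range.mp hj, ?_⟩
  set mv := ‖x (j + 1) - x j‖ ^ 2 with hmv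
  have hNsum : (N : ℝ) * mv ≤ ∑ i ∈ Finset.range N, ‖x (i + 1) - x i‖ ^ 2 := by
    calc (N : ℝ) * mv = ∑ _i ∈ Finset.range N, mv := by
          rw [Finset.sum_const, Finset.card_range, nsmul_eq_mul]
      _ ≤ ∑ i ∈ Finset.range N, ‖x (i + 1) - x i‖ ^ 2 :=
          Finset.sum_le_sum fun i hi => hmin i hi
  have hsum2 : (∑ i ∈ Finset.range N, ‖x (i + 1) - x i‖ ^ 2) ≤ 2 * t * (Fv 0 - Fstar) := by
    have h1 := hsum N
    have h2 : (∑ i ∈ Finset.range N, ‖x (i + 1) - x i‖ ^ 2) =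
        2 * t * ∑ i ∈ Finset.range N, ‖x (i + 1) - x i‖ ^ 2 / (2 * t) := by
      rw [Finset.mul_sum]
      congr 1
      ext i
      field_simp
    rw [h2]
    have h3 : (∑ i ∈ Finset.range N, ‖x (i + 1) - x i‖ ^ 2 / (2 * t)) ≤ Fv 0 - Fstar :=
      le_trans h1 (sub_le_sub_left (hFstar N) (Fv 0))
    exact mul_le_mul_of_nonneg_left h3 (by positivity)
  have hm2 : (N : ℝ) * mv ≤ 2 * t * (Fv 0 - Fstar) := le_trans hNsum hsum2
  have hN' : (0 : ℝ) < N := by exact_mod_cast hN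
  have hnorm : ‖t⁻¹ • (x j - x (j + 1))‖ ^ 2 = t⁻¹ ^ 2 * mv := by
    rw [norm_smul, Real.norm_eq_abs, abs_of_pos (inv_pos.2 ht), mul_pow, hmv,
      norm_sub_rev]
  rw [hnorm, le_div_iff₀ hN']
  calc t⁻¹ ^ 2 * mv * N = t⁻¹ ^ 2 * ((N : ℝ) * mv) := by ring
    _ ≤ t⁻¹ ^ 2 * (2 * t * (Fv 0 - Fstar)) :=
        mul_le_mul_of_nonneg_left hm2 (by positivity)
    _ = 2 * t⁻¹ * (g (x 0) + h (c (x 0)) - Fstar) := by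
        rw [hFv]; field_simp
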